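/- Let k and l be positive integers and let N be an integer with N ≥ 2 · 3^{max(k,l)}. Then in the symmetric group of permutations of Fin N, max( q_{ι_{3^k}}(ι_{3^l}), q_{ι_{3^l}}(ι_{3^k}) ) = 3^{|k−l|}; consequently the Tsuboi distance between the symmetrized conjugacy classes of ι_{3^k} and ι_{3^l} equals |k − l| · log 3. -/

import Mathlib

open Equiv Equiv.Perm List

/-- `iotaFin n k` is the permutation `(1,2)(3,4)⋯(2k−1,2k)` of `Fin n`. -/
def iotaFin (n k : ℕ) : Equiv.Perm (Fin n) :=
  ((List.range k).map fun i =>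
    if h : 2 * i + 1 < n then
      Equiv.swap (⟨2 * i, by omega⟩ : Fin n) ⟨2 * i + 1, h⟩
    else 1).prod

/-- `qnorm x g` is the least number `n` such that `g` is a product of `n` elements,
each conjugate to `x` or to `x⁻¹`. -/
noncomputable def qnorm {G : Type*} [Group G] (x g : G) : ℕ :=
  sInf {n | ∃ L : List G, L.length = n ∧ (∀ y ∈ L, IsConj x y ∨ IsConj x⁻¹ y) ∧ L.prod = g}

section Infra
set_option linter.unusedSectionVars false

variable {N : ℕ} [NeZero N]

def pt (N : ℕ) [NeZero N] (v : ℕ) : Fin N := Fin.ofNat N v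

lemma pt_val {v : ℕ} (h : v < N) : (pt N v : ℕ) = v := by
  simp [pt, Fin.ofNat, Nat.mod_eq_of_lt h]

lemma pt_ne {v w : ℕ} (hv : v < N) (hw : w < N) (h : v ≠ w) : pt N v ≠ pt N w := by
  intro he
  apply h
  have := congrArg Fin.val he
  rwa [pt_val hv, pt_val hw] at this

def sw (N : ℕ) [NeZero N] (v w : ℕ) : Equiv.Perm (Fin N) := Equiv.swap (pt N v) (pt N w)

lemma disjoint_sw {v w v' w' : ℕ} (hv : v < N) (hw : w < N) (hv' : v' < N) (hw' : w' < N)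
    (h1 : v ≠ v') (h2 : v ≠ w') (h3 : w ≠ v') (h4 : w ≠ w') :
    (sw N v w).Disjoint (sw N v' w') := by
  intro x
  by_cases hx : x = pt N v' ∨ x = pt N w'
  · left
    rcases hx with hx | hx <;> subst hx <;>
      exact Equiv.swap_apply_of_ne_of_ne (by apply pt_ne <;> omega) (by apply pt_ne <;> omega)
  · right
    push_neg at hx
    exact Equiv.swap_apply_of_ne_of_ne hx.1 hx.2

lemma sw_mul_self {v w : ℕ} : sw N v w * sw N v w = 1 := Equiv.swap_mul_self _ _

lemma cycleType_sw {v w : ℕ} (hv : v < N) (hw : w < N) (h : v ≠ w) :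
    (sw N v w).cycleType = Multiset.replicate 1 2 := by
  have hne : pt N v ≠ pt N w := pt_ne hv hw h
  rw [sw, (isCycle_swap hne).cycleType, card_support_swap hne]
  rfl

lemma cycleType_list_prod (L : List (Equiv.Perm (Fin N))) (h : L.Pairwise Equiv.Perm.Disjoint) :
    L.prod.cycleType = (L.map Equiv.Perm.cycleType).sum := by
  induction L with
  | nil => simp
  | cons x t ih =>
    rw [List.pairwise_cons] at h
    have hd : x.Disjoint t.prod := Equiv.Perm.disjoint_prod_right t h.1
    rw [List.prod_cons, hd.cycleType_mul, ih h.2, List.map_cons, List.sum_cons]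

lemma prod_sq_eq_one (L : List (Equiv.Perm (Fin N))) (h : L.Pairwise Equiv.Perm.Disjoint)
    (hinv : ∀ x ∈ L, x * x = 1) : L.prod * L.prod = 1 := by
  induction L with
  | nil => simp
  | cons x t ih =>
    rw [List.pairwise_cons] at h
    have hc : Commute x t.prod := (Equiv.Perm.disjoint_prod_right t h.1).commute
    rw [List.prod_cons]
    calc x * t.prod * (x * t.prod) = x * (t.prod * x) * t.prod := by group
    _ = x * (x * t.prod) * t.prod := by rw [hc.eq]
    _ = (x * x) * (t.prod * t.prod) := by group
    _ = 1 := by rw [hinv x (by simp), ih h.2 (fun y hy => hinv y (by simp [hy])), one_mul]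


def blockPerm (N : ℕ) [NeZero N] (s a : ℕ) : Equiv.Perm (Fin N) :=
  ((List.range a).map fun i => sw N (2*(s+i)) (2*(s+i)+1)).prod

lemma blockPerm_add (s a b : ℕ) :
    blockPerm N s (a + b) = blockPerm N s a * blockPerm N (s + a) b := by
  unfold blockPerm
  rw [List.range_add, List.map_append, List.prod_append, List.map_map]
  congr 2
  simp only [Function.comp_def, Nat.add_assoc]

lemma pairwise_disjoint_map_range {F : ℕ → Equiv.Perm (Fin N)} {t : ℕ}
    (h : ∀ i j, i < j → j < t → (F i).Disjoint (F j)) :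
    ((List.range t).map F).Pairwise Equiv.Perm.Disjoint := by
  rw [List.pairwise_map]
  exact ((List.pairwise_lt_range (n := t)).imp_of_mem fun ha hb hlt =>
    h _ _ hlt (List.mem_range.mp hb))

lemma blockPerm_pairwise (s a : ℕ) (hb : 2*(s+a) ≤ N) :
    (((List.range a).map fun i => sw N (2*(s+i)) (2*(s+i)+1))).Pairwise
      Equiv.Perm.Disjoint := by
  apply pairwise_disjoint_map_range
  intro i j hij hj
  exact disjoint_sw (by omega) (by omega) (by omega) (by omega)
    (by omega) (by omega) (by omega) (by omega)

lemma blockPerm_cycleType (s a : ℕ) (hb : 2*(s+a) ≤ N) :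
    (blockPerm N s a).cycleType = Multiset.replicate a 2 := by
  rw [blockPerm, cycleType_list_prod _ (blockPerm_pairwise s a hb), List.map_map]
  have : ∀ i ∈ List.range a,
      (Equiv.Perm.cycleType ∘ fun i => sw N (2*(s+i)) (2*(s+i)+1)) i
        = Multiset.replicate 1 2 := by
    intro i hi
    rw [List.mem_range] at hi
    exact cycleType_sw (by omega) (by omega) (by omega)
  rw [List.map_congr_left this]
  simp [Multiset.nsmul_singleton]

lemma blockPerm_sq (s a : ℕ) (hb : 2*(s+a) ≤ N) :
    blockPerm N s a * blockPerm N s a = 1 := by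
  apply prod_sq_eq_one _ (blockPerm_pairwise s a hb)
  intro x hx
  rw [List.mem_map] at hx
  obtain ⟨i, _, rfl⟩ := hx
  exact sw_mul_self

lemma blockPerm_support_card (s a : ℕ) (hb : 2*(s+a) ≤ N) :
    (blockPerm N s a).support.card = 2 * a := by
  rw [← Equiv.Perm.sum_cycleType, blockPerm_cycleType s a hb, Multiset.sum_replicate, smul_eq_mul]
  omega

lemma iotaFin_eq_blockPerm (m : ℕ) (hm : 2*m ≤ N) : iotaFin N m = blockPerm N 0 m := by
  unfold iotaFin blockPerm
  congr 1
  apply List.map_congr_left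
  intro i hi
  rw [List.mem_range] at hi
  have h1 : 2*i+1 < N := by omega
  rw [dif_pos h1]
  have e1 : pt N (2*(0+i)) = (⟨2*i, by omega⟩ : Fin N) :=
    Fin.ext (by rw [pt_val (by omega)]; show 2*(0+i) = 2*i; omega)
  have e2 : pt N (2*(0+i)+1) = (⟨2*i+1, h1⟩ : Fin N) :=
    Fin.ext (by rw [pt_val (by omega)]; show 2*(0+i)+1 = 2*i+1; omega)
  rw [sw, e1, e2]

lemma swap4 {α : Type*} [DecidableEq α] {a b c d : α} (hab : a≠b) (hac : a≠c) (had : a≠d)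
    (hbc : b≠c) (hbd : b≠d) (hcd : c≠d) :
    Equiv.swap a c * Equiv.swap b d * (Equiv.swap a d * Equiv.swap b c)
      = Equiv.swap a b * Equiv.swap c d := by
  ext x
  simp only [Equiv.Perm.mul_apply]
  rcases eq_or_ne x a with rfl | hxa
  · simp [Equiv.swap_apply_def, hab, hac, had, hbc, hbd, hcd,
      hab.symm, hac.symm, had.symm, hbc.symm, hbd.symm, hcd.symm]
  rcases eq_or_ne x b with rfl | hxb
  · simp [Equiv.swap_apply_def, hab, hac, had, hbc, hbd, hcd,
      hab.symm, hac.symm, had.symm, hbc.symm, hbd.symm, hcd.symm]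
  rcases eq_or_ne x c with rfl | hxc
  · simp [Equiv.swap_apply_def, hab, hac, had, hbc, hbd, hcd,
      hab.symm, hac.symm, had.symm, hbc.symm, hbd.symm, hcd.symm]
  rcases eq_or_ne x d with rfl | hxd
  · simp [Equiv.swap_apply_def, hab, hac, had, hbc, hbd, hcd,
      hab.symm, hac.symm, had.symm, hbc.symm, hbd.symm, hcd.symm]
  · simp [Equiv.swap_apply_def, hxa, hxb, hxc, hxd]

lemma sw4 {s : ℕ} (h : 2*s+3 < N) :
    sw N (2*s) (2*s+2) * sw N (2*s+1) (2*s+3) * (sw N (2*s) (2*s+3) * sw N (2*s+1) (2*s+2))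
      = sw N (2*s) (2*s+1) * sw N (2*s+2) (2*s+3) := by
  unfold sw
  exact swap4 (pt_ne (by omega) (by omega) (by omega)) (pt_ne (by omega) (by omega) (by omega))
    (pt_ne (by omega) (by omega) (by omega)) (pt_ne (by omega) (by omega) (by omega))
    (pt_ne (by omega) (by omega) (by omega)) (pt_ne (by omega) (by omega) (by omega))

lemma blockPerm_disjoint {s a s' a' : ℕ} (hle : s + a ≤ s') (hb : 2*(s'+a') ≤ N) :
    (blockPerm N s a).Disjoint (blockPerm N s' a') := by
  unfold blockPerm
  apply Equiv.Perm.disjoint_prod_right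
  intro g hg
  rw [List.mem_map] at hg
  obtain ⟨j, hj, rfl⟩ := hg
  rw [List.mem_range] at hj
  apply Equiv.Perm.Disjoint.symm
  apply Equiv.Perm.disjoint_prod_right
  intro g' hg'
  rw [List.mem_map] at hg'
  obtain ⟨i, hi, rfl⟩ := hg'
  rw [List.mem_range] at hi
  exact disjoint_sw (by omega) (by omega) (by omega) (by omega)
    (by omega) (by omega) (by omega) (by omega)

lemma blockPerm_chunks (a c : ℕ) :
    blockPerm N 0 (c*a) = ((List.range c).map fun j => blockPerm N (j*a) a).prod := by
  induction c with
  | zero => simp [blockPerm]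
  | succ n ih =>
    rw [List.range_succ, List.map_append, List.prod_append, ← ih, Nat.succ_mul,
      blockPerm_add, Nat.zero_add]
    simp

lemma prod_mul_prod_zip (F G : ℕ → Equiv.Perm (Fin N)) (t : ℕ)
    (h : ∀ i j, j < i → i < t → Commute (F i) (G j)) :
    ((List.range t).map F).prod * ((List.range t).map G).prod
      = ((List.range t).map fun i => F i * G i).prod := by
  induction t with
  | zero => simp
  | succ n ih =>
    have hc : Commute (F n) ((List.range n).map G).prod := by
      apply Commute.list_prod_right
      intro y hy
      rw [List.mem_map] at hy
      obtain ⟨j, hj, rfl⟩ := hy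
      rw [List.mem_range] at hj
      exact h n j hj (by omega)
    rw [List.range_succ, List.map_append, List.map_append, List.map_append,
      List.prod_append, List.prod_append, List.prod_append]
    simp only [List.map_cons, List.map_nil, List.prod_cons, List.prod_nil, mul_one]
    rw [← ih (fun i j h1 h2 => h i j h1 (by omega))]
    calc ((List.range n).map F).prod * F n * (((List.range n).map G).prod * G n)
        = ((List.range n).map F).prod * (F n * ((List.range n).map G).prod) * G n := by
          group
      _ = ((List.range n).map F).prod * (((List.range n).map G).prod * F n) * G n := by
          rw [hc.eq]
      _ = ((List.range n).map F).prod * ((List.range n).map G).prod * (F n * G n) := by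
          group

lemma blockPerm_two (s : ℕ) :
    blockPerm N s 2 = sw N (2*s) (2*s+1) * sw N (2*s+2) (2*s+3) := by
  have e1 : 2*(s+1) = 2*s+2 := by omega
  have e2 : 2*(s+1)+1 = 2*s+3 := by omega
  have e3 : 2*(s+0) = 2*s := by omega
  have e4 : 2*(s+0)+1 = 2*s+1 := by omega
  simp [blockPerm, List.range_succ, e1, e2, e3, e4]

lemma pair_group (r t : ℕ) :
    ((List.range t).map fun j =>
        sw N (2*(r+2*j)) (2*(r+2*j)+1) * sw N (2*(r+2*j)+2) (2*(r+2*j)+3)).prod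
      = blockPerm N r (2*t) := by
  induction t with
  | zero => simp [blockPerm]
  | succ n ih =>
    rw [List.range_succ, List.map_append, List.prod_append, ih,
      show 2*(n+1) = 2*n + 2 by omega, blockPerm_add, blockPerm_two]
    simp

lemma sigma_tau (r t : ℕ) (hm : 2*(r+2*t) ≤ N) :
    ∃ σ τ : Equiv.Perm (Fin N),
      σ.cycleType = Multiset.replicate (r+2*t) 2 ∧
      τ.cycleType = Multiset.replicate (r+2*t) 2 ∧
      σ * τ * blockPerm N 0 (r+2*t) = blockPerm N 0 r := by
  set FA : ℕ → Equiv.Perm (Fin N) := fun j =>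
    sw N (2*(r+2*j)) (2*(r+2*j)+2) * sw N (2*(r+2*j)+1) (2*(r+2*j)+3) with hFA
  set FB : ℕ → Equiv.Perm (Fin N) := fun j =>
    sw N (2*(r+2*j)) (2*(r+2*j)+3) * sw N (2*(r+2*j)+1) (2*(r+2*j)+2) with hFB
  set PA := ((List.range t).map FA).prod with hPA
  set PB := ((List.range t).map FB).prod with hPB
  set R := blockPerm N 0 r with hR
  set W := blockPerm N r (2*t) with hW
  have hAA : ∀ i j, i < t → j < t → i ≠ j → (FA i).Disjoint (FA j) := by
    intro i j hi hj hij
    apply Equiv.Perm.Disjoint.mul_left <;> apply Equiv.Perm.Disjoint.mul_right <;>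
      exact disjoint_sw (by omega) (by omega) (by omega) (by omega)
        (by omega) (by omega) (by omega) (by omega)
  have hBB : ∀ i j, i < t → j < t → i ≠ j → (FB i).Disjoint (FB j) := by
    intro i j hi hj hij
    apply Equiv.Perm.Disjoint.mul_left <;> apply Equiv.Perm.Disjoint.mul_right <;>
      exact disjoint_sw (by omega) (by omega) (by omega) (by omega)
        (by omega) (by omega) (by omega) (by omega)
  have hAB : ∀ i j, i < t → j < t → i ≠ j → (FA i).Disjoint (FB j) := by
    intro i j hi hj hij
    apply Equiv.Perm.Disjoint.mul_left <;> apply Equiv.Perm.Disjoint.mul_right <;>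
      exact disjoint_sw (by omega) (by omega) (by omega) (by omega)
        (by omega) (by omega) (by omega) (by omega)
  have hswblock : ∀ v w : ℕ, 2*r ≤ v → v < N → 2*r ≤ w → w < N →
      (sw N v w).Disjoint R := by
    intro v w h1 h2 h3 h4
    apply Equiv.Perm.disjoint_prod_right
    intro g hg
    rw [List.mem_map] at hg
    obtain ⟨i2, hi2, rfl⟩ := hg
    rw [List.mem_range] at hi2
    exact disjoint_sw h2 h4 (by omega) (by omega) (by omega) (by omega) (by omega) (by omega)
  have hRA : R.Disjoint PA := by
    apply Equiv.Perm.disjoint_prod_right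
    intro g hg
    rw [List.mem_map] at hg
    obtain ⟨i, hi, rfl⟩ := hg
    rw [List.mem_range] at hi
    refine (Equiv.Perm.Disjoint.mul_left ?_ ?_).symm <;>
      exact hswblock _ _ (by omega) (by omega) (by omega) (by omega)
  have hRB : R.Disjoint PB := by
    apply Equiv.Perm.disjoint_prod_right
    intro g hg
    rw [List.mem_map] at hg
    obtain ⟨i, hi, rfl⟩ := hg
    rw [List.mem_range] at hi
    refine (Equiv.Perm.Disjoint.mul_left ?_ ?_).symm <;>
      exact hswblock _ _ (by omega) (by omega) (by omega) (by omega)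
  have hRR : R * R = 1 := blockPerm_sq 0 r (by omega)
  have hWW : W * W = 1 := blockPerm_sq r (2*t) (by omega)
  have hRW : R.Disjoint W := blockPerm_disjoint (by omega) (by omega)
  have hPABW : PA * PB = W := by
    rw [hPA, hPB, hW, prod_mul_prod_zip FA FB t
      (fun i j hji hi => (hAB i j hi (by omega) (by omega)).commute), ← pair_group r t]
    congr 1
    apply List.map_congr_left
    intro i hi
    rw [List.mem_range] at hi
    exact sw4 (s := r + 2*i) (by omega)
  have hcycA : PA.cycleType = Multiset.replicate (2*t) 2 := by
    rw [hPA, cycleType_list_prod _ (pairwise_disjoint_map_range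
      (fun i j hij hj => hAA i j (by omega) hj (by omega))), List.map_map]
    have : ∀ i ∈ List.range t, (Equiv.Perm.cycleType ∘ FA) i = Multiset.replicate 2 2 := by
      intro i hi
      rw [List.mem_range] at hi
      have hd : (sw N (2*(r+2*i)) (2*(r+2*i)+2)).Disjoint (sw N (2*(r+2*i)+1) (2*(r+2*i)+3)) :=
        disjoint_sw (by omega) (by omega) (by omega) (by omega)
          (by omega) (by omega) (by omega) (by omega)
      show (FA i).cycleType = _
      rw [hFA]
      simp only []
      rw [hd.cycleType_mul, cycleType_sw (by omega) (by omega) (by omega),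
        cycleType_sw (by omega) (by omega) (by omega), ← Multiset.replicate_add]
    rw [List.map_congr_left this]
    simp only [List.map_const', List.length_range, List.sum_replicate, Multiset.nsmul_replicate]
    rw [Nat.mul_comm]
  have hcycB : PB.cycleType = Multiset.replicate (2*t) 2 := by
    rw [hPB, cycleType_list_prod _ (pairwise_disjoint_map_range
      (fun i j hij hj => hBB i j (by omega) hj (by omega))), List.map_map]
    have : ∀ i ∈ List.range t, (Equiv.Perm.cycleType ∘ FB) i = Multiset.replicate 2 2 := by
      intro i hi
      rw [List.mem_range] at hi
      have hd : (sw N (2*(r+2*i)) (2*(r+2*i)+3)).Disjoint (sw N (2*(r+2*i)+1) (2*(r+2*i)+2)) :=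
        disjoint_sw (by omega) (by omega) (by omega) (by omega)
          (by omega) (by omega) (by omega) (by omega)
      show (FB i).cycleType = _
      rw [hFB]
      simp only []
      rw [hd.cycleType_mul, cycleType_sw (by omega) (by omega) (by omega),
        cycleType_sw (by omega) (by omega) (by omega), ← Multiset.replicate_add]
    rw [List.map_congr_left this]
    simp only [List.map_const', List.length_range, List.sum_replicate, Multiset.nsmul_replicate]
    rw [Nat.mul_comm]
  refine ⟨R * PA, R * PB, ?_, ?_, ?_⟩
  · rw [hRA.cycleType_mul, hcycA, blockPerm_cycleType 0 r (by omega), ← Multiset.replicate_add]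
  · rw [hRB.cycleType_mul, hcycB, blockPerm_cycleType 0 r (by omega), ← Multiset.replicate_add]
  · have hdec : blockPerm N 0 (r+2*t) = R * W := by
      have h0 := blockPerm_add (N := N) 0 r (2*t)
      rw [Nat.zero_add] at h0
      rw [hR, hW]
      exact h0
    have hc1 : PA * R = R * PA := (hRA.commute.symm).eq
    have hc2 : W * R = R * W := (hRW.commute.symm).eq
    calc R * PA * (R * PB) * blockPerm N 0 (r+2*t)
        = R * (PA * R) * PB * blockPerm N 0 (r+2*t) := by group
      _ = R * (R * PA) * PB * blockPerm N 0 (r+2*t) := by rw [hc1]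
      _ = (R * R) * (PA * PB) * blockPerm N 0 (r+2*t) := by group
      _ = W * (R * W) := by rw [hRR, hPABW, hdec, one_mul]
      _ = (W * R) * W := by group
      _ = (R * W) * W := by rw [hc2]
      _ = R * (W * W) := by group
      _ = R := by rw [hWW, mul_one]


lemma card_support_prod_le (L : List (Equiv.Perm (Fin N))) (c' : ℕ)
    (h : ∀ y ∈ L, y.support.card ≤ c') : L.prod.support.card ≤ L.length * c' := by
  induction L with
  | nil => simp
  | cons x tl ih =>
    rw [List.prod_cons, List.length_cons]
    calc (x * tl.prod).support.card ≤ (x.support ∪ tl.prod.support).card :=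
          Finset.card_le_card (Equiv.Perm.support_mul_le x tl.prod)
      _ ≤ x.support.card + tl.prod.support.card := Finset.card_union_le _ _
      _ ≤ c' + tl.length * c' := by
          have := ih (fun y hy => h y (by simp [hy]))
          have := h x (by simp)
          omega
      _ = (tl.length + 1) * c' := by ring

end Infra

lemma qnorm_le_of_list {G : Type*} [Group G] (x g : G) (L : List G)
    (hL : ∀ y ∈ L, IsConj x y) (hp : L.prod = g) : qnorm x g ≤ L.length :=
  Nat.sInf_le ⟨L, rfl, fun y hy => Or.inl (hL y hy), hp⟩

lemma qnorm_ge_of {G : Type*} [Group G] (x g : G) (c : ℕ)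
    (hne : {n | ∃ L : List G, L.length = n ∧
      (∀ y ∈ L, IsConj x y ∨ IsConj x⁻¹ y) ∧ L.prod = g}.Nonempty)
    (h : ∀ L : List G, (∀ y ∈ L, IsConj x y ∨ IsConj x⁻¹ y) → L.prod = g → c ≤ L.length) :
    c ≤ qnorm x g := by
  obtain ⟨L, hlen, h1, h2⟩ := Nat.sInf_mem hne
  exact le_of_le_of_eq (h L h1 h2) hlen


/-- Corollary 8.5: for positive `k, l` and `N ≥ 2·3^(max k l)`,
`max (q_{ι_{3^k}}(ι_{3^l}), q_{ι_{3^l}}(ι_{3^k})) = 3^{|k−l|}`, so the Tsuboi distance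
between the classes of `ι_{3^k}` and `ι_{3^l}` is `|k − l| · log 3`. -/
theorem tsuboi_distance_iota_pow_three (k l N : ℕ) (hk : 0 < k) (hl : 0 < l)
    (hN : 2 * 3 ^ max k l ≤ N) :
    max (qnorm (iotaFin N (3 ^ k)) (iotaFin N (3 ^ l)))
        (qnorm (iotaFin N (3 ^ l)) (iotaFin N (3 ^ k))) = 3 ^ (max k l - min k l) ∧
    Real.log (max (qnorm (iotaFin N (3 ^ k)) (iotaFin N (3 ^ l)))
        (qnorm (iotaFin N (3 ^ l)) (iotaFin N (3 ^ k))) : ℕ)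
      = |(k : ℝ) - (l : ℝ)| * Real.log 3 := by
  wlog hkl : k ≤ l generalizing k l with H
  · obtain ⟨h1, h2⟩ := H l k hl hk (by rwa [Nat.max_comm]) (by omega)
    rw [Nat.max_comm l k, Nat.min_comm l k, max_comm] at h1
    rw [max_comm, abs_sub_comm] at h2
    exact ⟨h1, h2⟩
  -- now k ≤ l
  have h3l : (0:ℕ) < 3 ^ l := Nat.pow_pos (n := l) (by norm_num)
  have h3k : (0:ℕ) < 3 ^ k := Nat.pow_pos (n := k) (by norm_num)
  haveI : NeZero N := ⟨by rw [Nat.max_eq_right hkl] at hN; omega⟩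
  set a := 3 ^ k with ha
  set b := 3 ^ l with hb
  set d := l - k with hd
  set c := 3 ^ d with hc
  have hba : b = c * a := by
    rw [hb, hc, ha, ← pow_add]
    congr 1
    omega
  have hab : a ≤ b := Nat.pow_le_pow_right (by norm_num) hkl
  have hbN : 2 * b ≤ N := by rwa [Nat.max_eq_right hkl] at hN
  have haN : 2 * a ≤ N := by omega
  have hapos : 0 < a := h3k
  have hbpos : 0 < b := h3l
  have hcpos : 0 < c := Nat.pow_pos (n := d) (by norm_num)
  have hcta : (iotaFin N a).cycleType = Multiset.replicate a 2 := by
    rw [iotaFin_eq_blockPerm a haN]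
    exact blockPerm_cycleType 0 a (by omega)
  have hctb : (iotaFin N b).cycleType = Multiset.replicate b 2 := by
    rw [iotaFin_eq_blockPerm b hbN]
    exact blockPerm_cycleType 0 b (by omega)
  -- upper bound for q_{iota_a}(iota_b)
  have hAle : qnorm (iotaFin N a) (iotaFin N b) ≤ c := by
    have := qnorm_le_of_list (iotaFin N a) (iotaFin N b)
      ((List.range c).map fun j => blockPerm N (j*a) a) ?_ ?_
    · simpa using this
    · intro y hy
      rw [List.mem_map] at hy
      obtain ⟨j, hj, rfl⟩ := hy
      rw [List.mem_range] at hj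
      rw [Equiv.Perm.isConj_iff_cycleType_eq, hcta]
      have hjb : j * a + a ≤ b := by
        rw [hba]
        calc j * a + a = (j+1) * a := by ring
          _ ≤ c * a := Nat.mul_le_mul_right a hj
      exact (blockPerm_cycleType (j*a) a (by omega)).symm
    · rw [← blockPerm_chunks a c, ← hba, iotaFin_eq_blockPerm b hbN]
  -- lower bound for q_{iota_a}(iota_b)
  have hAge : c ≤ qnorm (iotaFin N a) (iotaFin N b) := by
    apply qnorm_ge_of
    · refine ⟨(((List.range c).map fun j => blockPerm N (j*a) a)).length,
        ((List.range c).map fun j => blockPerm N (j*a) a), rfl, ?_, ?_⟩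
      · intro y hy
        rw [List.mem_map] at hy
        obtain ⟨j, hj, rfl⟩ := hy
        rw [List.mem_range] at hj
        left
        rw [Equiv.Perm.isConj_iff_cycleType_eq, hcta]
        have hjb : j * a + a ≤ b := by
          rw [hba]
          calc j * a + a = (j+1) * a := by ring
            _ ≤ c * a := Nat.mul_le_mul_right a hj
        exact (blockPerm_cycleType (j*a) a (by omega)).symm
      · rw [← blockPerm_chunks a c, ← hba, iotaFin_eq_blockPerm b hbN]
    · intro L hconj hprod
      have hcard : ∀ y ∈ L, y.support.card ≤ 2*a := by
        intro y hy
        have hyct : y.cycleType = Multiset.replicate a 2 := by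
          rcases hconj y hy with h | h
          · rw [← Equiv.Perm.isConj_iff_cycleType_eq.mp h, hcta]
          · rw [← Equiv.Perm.isConj_iff_cycleType_eq.mp h, Equiv.Perm.cycleType_inv, hcta]
        rw [← Equiv.Perm.sum_cycleType y, hyct, Multiset.sum_replicate, smul_eq_mul]
        omega
      have hle := card_support_prod_le L (2*a) hcard
      rw [hprod] at hle
      have hsupb : (iotaFin N b).support.card = 2*b := by
        rw [iotaFin_eq_blockPerm b hbN]
        exact blockPerm_support_card 0 b (by omega)
      rw [hsupb] at hle
      have hle2 : 2*b ≤ 2*(L.length * a) := by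
        calc 2*b ≤ L.length * (2*a) := hle
          _ = 2*(L.length * a) := by ring
      have hle3 : c * a ≤ L.length * a := by omega
      exact Nat.le_of_mul_le_mul_right hle3 hapos
  have hA : qnorm (iotaFin N a) (iotaFin N b) = c := le_antisymm hAle hAge
  -- upper bound for q_{iota_b}(iota_a)
  have hBle : qnorm (iotaFin N b) (iotaFin N a) ≤ c := by
    rcases Nat.eq_or_lt_of_le hkl with rfl | hlt
    · have : d = 0 := by omega
      have hc1 : c = 1 := by rw [hc, this]; rfl
      rw [hc1]
      have := qnorm_le_of_list (iotaFin N b) (iotaFin N a) [iotaFin N b]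
        (by intro y hy; simp at hy; subst hy; exact IsConj.refl _)
        (by simp [ha, hb])
      simpa using this
    · -- k < l, so c ≥ 3
      have hdpos : 0 < d := by omega
      have hc3 : 3 ≤ c := by
        calc (3:ℕ) = 3^1 := by norm_num
          _ ≤ 3^d := Nat.pow_le_pow_right (by norm_num) hdpos
      have hodd_a : a % 2 = 1 := by
        rw [ha]
        rw [Nat.pow_mod]
        simp
      have hodd_b : b % 2 = 1 := by
        rw [hb]
        rw [Nat.pow_mod]
        simp
      set t := (b - a)/2 with ht
      have hbat : a + 2*t = b := by omega
      obtain ⟨σ, τ, hσ, hτ, hστ⟩ := sigma_tau (N := N) a t (by omega)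
      have hoddc : c % 2 = 1 := by rw [hc, Nat.pow_mod]; simp
      set u := (c - 3)/2 with hu
      have hcu : c - 2 = 2*u + 1 := by omega
      have hx2 : iotaFin N b * iotaFin N b = 1 := by
        rw [iotaFin_eq_blockPerm b hbN]
        exact blockPerm_sq 0 b (by omega)
      have hxp : (iotaFin N b)^(c-2) = iotaFin N b := by
        rw [hcu, pow_succ, pow_mul]
        have : (iotaFin N b)^2 = 1 := by rw [sq, hx2]
        rw [this, one_pow, one_mul]
      have := qnorm_le_of_list (iotaFin N b) (iotaFin N a)
        (σ :: τ :: List.replicate (c-2) (iotaFin N b)) ?_ ?_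
      · rw [List.length_cons, List.length_cons, List.length_replicate] at this
        calc qnorm (iotaFin N b) (iotaFin N a) ≤ c - 2 + 1 + 1 := this
          _ ≤ c := by omega
      · intro y hy
        rw [List.mem_cons, List.mem_cons] at hy
        rcases hy with rfl | rfl | hy
        · rw [Equiv.Perm.isConj_iff_cycleType_eq, hctb, hσ, hbat]
        · rw [Equiv.Perm.isConj_iff_cycleType_eq, hctb, hτ, hbat]
        · rw [List.eq_of_mem_replicate hy]
      · rw [List.prod_cons, List.prod_cons, List.prod_replicate, hxp,
          ← mul_assoc, iotaFin_eq_blockPerm b hbN, iotaFin_eq_blockPerm a haN,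
          ← hbat]
        exact hστ
  have hmax : max (qnorm (iotaFin N a) (iotaFin N b)) (qnorm (iotaFin N b) (iotaFin N a)) = c := by
    rw [hA]
    exact max_eq_left (hA ▸ hBle)
  constructor
  · rw [hmax, Nat.max_eq_right hkl, Nat.min_eq_left hkl, hc, hd]
  · rw [hmax, hc]
    have habs : |(k:ℝ) - (l:ℝ)| = ((d:ℕ):ℝ) := by
      rw [abs_sub_comm, abs_of_nonneg (by
        have : (k:ℝ) ≤ (l:ℝ) := by exact_mod_cast hkl
        linarith), hd, Nat.cast_sub hkl]
    rw [habs]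
    push_cast
    rw [Real.log_pow]
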